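/- Let n be a positive integer and a, b integers. The linear congruence a·x ≡ b (mod n) admits a solution x with gcd(x, n) = 1 if and only if gcd(a, n) = gcd(b, n). -/

import Mathlib

private lemma gcd_eq_of_modEq {n : ℕ} {c c' : ℤ} (h : c ≡ c' [ZMOD (n : ℤ)]) :
    Int.gcd c n = Int.gcd c' n := by
  have key : ∀ u v : ℤ, u ≡ v [ZMOD (n : ℤ)] → Int.gcd u n ∣ Int.gcd v n := by
    intro u v huv
    obtain ⟨k, hk⟩ := Int.ModEq.dvd huv
    have hv : v = u + n * k := by linarith
    have h1 : (Int.gcd u n : ℤ) ∣ v := by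
      rw [hv]
      exact dvd_add (Int.gcd_dvd_left _ _) ((Int.gcd_dvd_right _ _).mul_right k)
    exact Int.natCast_dvd_natCast.mp (Int.dvd_coe_gcd h1 (Int.gcd_dvd_right _ _))
  exact Nat.dvd_antisymm (key c c' h) (key c' c h.symm)

theorem linear_congruence_coprime_solvable (n : ℕ) (hn : 0 < n) (a b : ℤ) :
    (∃ x : ℤ, Int.gcd x n = 1 ∧ a * x ≡ b [ZMOD n]) ↔ Int.gcd a n = Int.gcd b n := by
  constructor
  · rintro ⟨x, hx, hmod⟩
    have h1 : Int.gcd (a * x) n = Int.gcd b n := gcd_eq_of_modEq hmod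
    rw [← h1, Int.gcd, Int.gcd, Int.natAbs_mul]
    exact (Nat.Coprime.gcd_mul_right_cancel _ hx).symm
  · intro h
    set d : ℕ := Int.gcd a n with hd
    have hd0 : 0 < d := Int.gcd_pos_of_ne_zero_right a (by exact_mod_cast hn.ne')
    have hdn : (d : ℤ) ∣ (n : ℤ) := Int.gcd_dvd_right _ _
    have hdnnat : d ∣ n := Int.natCast_dvd_natCast.mp hdn
    set m : ℕ := n / d with hm
    have hmn : n = d * m := (Nat.div_mul_cancel hdnnat).symm.trans (mul_comm _ _)
    have hm0 : 0 < m := Nat.pos_of_ne_zero (by rintro h0; rw [h0, mul_zero] at hmn; omega)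
    have hda : (d : ℤ) ∣ a := Int.gcd_dvd_left _ _
    have hdb : (d : ℤ) ∣ b := by rw [h]; exact Int.gcd_dvd_left _ _
    set a' : ℤ := a / (d : ℤ) with ha'
    set b' : ℤ := b / (d : ℤ) with hb'
    have ha : a = d * a' := (Int.mul_ediv_cancel' hda).symm
    have hb : b = d * b' := (Int.mul_ediv_cancel' hdb).symm
    have hnm' : (n : ℤ) = (d : ℤ) * (m : ℤ) := by exact_mod_cast hmn
    have hnd : ((n : ℤ)) / (d : ℤ) = (m : ℤ) := by
      rw [hnm', Int.mul_ediv_cancel_left _ (by exact_mod_cast hd0.ne')]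
    have hcopa : Int.gcd a' m = 1 := by
      have := Int.gcd_div_gcd_div_gcd (i := a) (j := (n : ℤ)) (by exact_mod_cast hd0)
      rwa [← hd, hnd] at this
    have hcopb : Int.gcd b' m = 1 := by
      have := Int.gcd_div_gcd_div_gcd (i := b) (j := (n : ℤ)) (by rw [← h]; exact_mod_cast hd0)
      rwa [← h, hnd] at this
    haveI : NeZero n := ⟨hn.ne'⟩
    haveI : NeZero m := ⟨hm0.ne'⟩
    have hUa : IsUnit ((a' : ZMod m)) := by
      obtain ⟨u, v, huv⟩ := Int.isCoprime_iff_gcd_eq_one.mpr hcopa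
      apply IsUnit.of_mul_eq_one ((u : ZMod m))
      have h2 := congrArg (Int.cast : ℤ → ZMod m) huv
      push_cast at h2
      rw [ZMod.natCast_self, mul_zero, add_zero] at h2
      rw [mul_comm]; exact h2
    have hUb : IsUnit ((b' : ZMod m)) := by
      obtain ⟨u, v, huv⟩ := Int.isCoprime_iff_gcd_eq_one.mpr hcopb
      apply IsUnit.of_mul_eq_one ((u : ZMod m))
      have h2 := congrArg (Int.cast : ℤ → ZMod m) huv
      push_cast at h2
      rw [ZMod.natCast_self, mul_zero, add_zero] at h2
      rw [mul_comm]; exact h2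
    have hmdvd : m ∣ n := ⟨d, by rw [hmn]; ring⟩
    obtain ⟨u, hu⟩ := ZMod.unitsMap_surjective hmdvd (hUa.unit⁻¹ * hUb.unit)
    refine ⟨((u : ZMod n).val : ℤ), ?_, ?_⟩
    · rw [Int.gcd_natCast_natCast]
      exact ZMod.val_coe_unit_coprime u
    · have hxm : (((u : ZMod n).val : ℕ) : ZMod m) = ((hUa.unit⁻¹ * hUb.unit : (ZMod m)ˣ) : ZMod m) := by
        have h3 := congrArg (Units.val) hu
        rw [ZMod.unitsMap] at h3
        simp only [Units.coe_map, MonoidHom.coe_coe, ZMod.castHom_apply] at h3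
        rw [ZMod.natCast_val]
        exact h3
      have key : (m : ℤ) ∣ a' * ((u : ZMod n).val : ℤ) - b' := by
        rw [← ZMod.intCast_zmod_eq_zero_iff_dvd]
        push_cast
        rw [hxm]
        have e1 : (a' : ZMod m) * ((hUa.unit⁻¹ : (ZMod m)ˣ) : ZMod m) = 1 :=
          Units.mul_inv_of_eq hUa.unit_spec
        rw [Units.val_mul, ← mul_assoc, e1, one_mul, hUb.unit_spec, sub_self]
      have hdvd : (n : ℤ) ∣ b - a * ((u : ZMod n).val : ℤ) := by
        have : b - a * ((u : ZMod n).val : ℤ) = (d : ℤ) * -(a' * ((u : ZMod n).val : ℤ) - b') := by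
          rw [ha, hb]; ring
        rw [this, hnm']
        exact mul_dvd_mul_left _ (dvd_neg.mpr key)
      exact Int.modEq_iff_dvd.mpr hdvd
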